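/- Let q be a prime power, N = q^2 − 1, F a finite field with q^2 elements, K a subfield of F with q elements, α ∈ F \ K, and g a generator of the cyclic group F*. For u ∈ F* let log_g u be the unique integer m with 0 ≤ m < N and g^m = u. Then for all integers k₁, k₂ with 0 ≤ k₁, k₂ ≤ N−1 such that (q−1) does not divide (k₁ − k₂), the quantity (1/(q+1))·|1 + ∑_{t∈K} exp(2πi·(k₁−k₂)·log_g(t−α)/N)| lies between (√q − 1)/(q+1) and (√q + 1)/(q+1) inclusive. Equivalently, for the (q+1) × N matrix Φ whose column indexed by j has the entry (1/√(q+1))·1 together with the entries (1/√(q+1))·exp(2πi·j·log_g(t−α)/N) for t ∈ K, any two columns Φ_{k₁}, Φ_{k₂} with k₁ ≢ k₂ (mod q−1) satisfy (√q − 1)/(q+1) ≤ |⟨Φ_{k₁}, Φ_{k₂}⟩| ≤ (√q + 1)/(q+1). -/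

import Mathlib

open Finset

lemma pow_eq_pow_of_modEq_aux {ζ : ℂ} {N : ℕ} (h : ζ ^ N = 1) {a b : ℕ}
    (hab : a ≡ b [MOD N]) : ζ ^ a = ζ ^ b := by
  have key : ∀ n : ℕ, ζ ^ n = ζ ^ (n % N) := by
    intro n
    conv_lhs => rw [← Nat.div_add_mod n N]
    rw [pow_add, pow_mul, h, one_pow, one_mul]
  rw [key a, key b, hab]


lemma sum_eq_zero_of_mul_shift_aux {F : Type*} [Field F] [DecidableEq F] (s : Finset F)
    (y : F) (hy : y ≠ 0) (f : F → ℂ) (c : ℂ) (hc : c ≠ 1)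
    (hmap : ∀ u ∈ s, y * u ∈ s) (hf : ∀ u ∈ s, f (y * u) = c * f u) :
    ∑ u ∈ s, f u = 0 := by
  have hinj : ∀ a ∈ s, ∀ b ∈ s, y * a = y * b → a = b := fun a _ b _ h =>
    mul_left_cancel₀ hy h
  have himg : s.image (y * ·) = s := by
    apply Finset.eq_of_subset_of_card_le
    · intro x hx
      obtain ⟨u, hu, rfl⟩ := Finset.mem_image.mp hx
      exact hmap u hu
    · rw [Finset.card_image_of_injOn fun a ha b hb h => hinj a ha b hb h]
  have h1 : ∑ u ∈ s, f u = ∑ u ∈ s, f (y * u) := by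
    conv_lhs => rw [← himg]
    rw [Finset.sum_image hinj]
  have h2 : ∑ u ∈ s, f (y * u) = c * ∑ u ∈ s, f u := by
    rw [Finset.mul_sum]
    exact Finset.sum_congr rfl hf
  have h3 : (c - 1) * ∑ u ∈ s, f u = 0 := by
    rw [sub_mul, one_mul, ← h2, ← h1, sub_self]
  rcases mul_eq_zero.mp h3 with h | h
  · exact absurd (sub_eq_zero.mp h) hc
  · exact h




/-- **Theorem 3.4(2): near-orthogonality across different bases.**
Let `q` be a prime power, `N = q² − 1`, `F` a finite field with `q²` elements, `K` a
subfield with `q` elements, `α ∈ F \ K`, and `g` a generator of `Fˣ`.  Then for all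
`0 ≤ k₁, k₂ ≤ N−1` with `(q−1) ∤ (k₁ − k₂)`,
`(√q − 1)/(q+1) ≤ (1/(q+1))·|1 + ∑_{t∈K} exp(2πi·(k₁−k₂)·log_g(t−α)/N)| ≤ (√q + 1)/(q+1)`,
i.e. any two columns `Φ_{k₁}, Φ_{k₂}` of the `(q+1) × N` partial Fourier matrix with
`k₁ ≢ k₂ (mod q−1)` satisfy `(√q − 1)/(q+1) ≤ |⟨Φ_{k₁}, Φ_{k₂}⟩| ≤ (√q + 1)/(q+1)`. -/
theorem partial_fourier_cross_incoherence
    (q N : ℕ) (hq : IsPrimePow q) (hN : N = q ^ 2 - 1)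
    (F : Type*) [Field F] [Fintype F]
    (hF : Fintype.card F = q ^ 2)
    (K : Subfield F) [Fintype ↥K] (hK : Fintype.card ↥K = q)
    (α : F) (hα : α ∉ K)
    (g : Fˣ) (hg : ∀ x : Fˣ, x ∈ Subgroup.zpowers g)
    (log : F → ℕ)
    (hlog : ∀ u : F, u ≠ 0 → log u < N ∧ (g : F) ^ log u = u) :
    ∀ k₁ k₂ : ℕ, k₁ < N → k₂ < N → ¬ (((q : ℤ) - 1) ∣ ((k₁ : ℤ) - (k₂ : ℤ))) →
      (Real.sqrt q - 1) / ((q : ℝ) + 1) ≤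
        (1 / ((q : ℝ) + 1)) * ‖(1 : ℂ) +
          ∑ t : ↥K, Complex.exp (2 * (Real.pi : ℂ) * Complex.I *
            ((k₁ : ℂ) - (k₂ : ℂ)) * (log ((t : F) - α) : ℂ) / (N : ℂ))‖ ∧
      (1 / ((q : ℝ) + 1)) * ‖(1 : ℂ) +
          ∑ t : ↥K, Complex.exp (2 * (Real.pi : ℂ) * Complex.I *
            ((k₁ : ℂ) - (k₂ : ℂ)) * (log ((t : F) - α) : ℂ) / (N : ℂ))‖ ≤
        (Real.sqrt q + 1) / ((q : ℝ) + 1) := by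
  intro k₁ k₂ hk1 hk2 hdvd
  classical
  have hq2 : 2 ≤ q := hq.two_le
  have hq3 : 3 ≤ q := by
    rcases eq_or_lt_of_le hq2 with h | h
    · exfalso; apply hdvd; rw [← h]; norm_num
    · omega
  have hq2sq : 9 ≤ q ^ 2 := by nlinarith
  have hNsucc : N + 1 = q ^ 2 := by omega
  have hNpos : 0 < N := by omega
  have hNfact : N = (q + 1) * (q - 1) := by
    obtain ⟨r, rfl⟩ : ∃ r, q = r + 1 := ⟨q - 1, by omega⟩
    simp only [Nat.add_sub_cancel]
    have : (r + 1) ^ 2 = (r + 1 + 1) * r + 1 := by ring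
    omega
  -- order of g
  have hcardu : Fintype.card Fˣ = N := by rw [Fintype.card_units, hF, hN]
  have hord : orderOf g = N := by
    rw [orderOf_eq_card_of_forall_mem_zpowers hg, Nat.card_eq_fintype_card, hcardu]
  have hgN : (g : F) ^ N = 1 := by
    have : g ^ N = 1 := by rw [← hord]; exact pow_orderOf_eq_one g
    have h2 := congrArg Units.val this
    push_cast at h2
    exact h2
  have hlog_mod : ∀ u : F, u ≠ 0 → ∀ m : ℕ, (g : F) ^ m = u → log u ≡ m [MOD N] := by
    intro u hu m hm
    have h1 : (g : F) ^ log u = (g : F) ^ m := by rw [(hlog u hu).2, hm]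
    have h2 : g ^ log u = g ^ m := by
      ext; push_cast; exact h1
    have := pow_eq_pow_iff_modEq.mp h2
    rwa [hord] at this
  -- the root of unity
  set c : ℂ := (k₁ : ℂ) - (k₂ : ℂ) with hc
  set ζ : ℂ := Complex.exp (2 * (Real.pi : ℂ) * Complex.I * c / (N : ℂ)) with hζ
  have hNC : (N : ℂ) ≠ 0 := Nat.cast_ne_zero.mpr (by omega)
  have hterm : ∀ m : ℕ, Complex.exp (2 * (Real.pi : ℂ) * Complex.I * c * (m : ℂ) / (N : ℂ))
      = ζ ^ m := by
    intro m
    rw [hζ, ← Complex.exp_nat_mul]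
    congr 1
    field_simp
  have hcint : c = ((k₁ : ℤ) - (k₂ : ℤ) : ℤ) := by push_cast [hc]; ring
  have hζN : ζ ^ N = 1 := by
    rw [hζ, ← Complex.exp_nat_mul]
    have : (N : ℂ) * (2 * (Real.pi : ℂ) * Complex.I * c / (N : ℂ))
        = ((k₁ : ℤ) - (k₂ : ℤ) : ℤ) * (2 * (Real.pi : ℂ) * Complex.I) := by
      rw [← hcint]; field_simp
    rw [this, Complex.exp_int_mul_two_pi_mul_I]
  have hq1C : ((q : ℂ) - 1) ≠ 0 := by
    intro h
    have : (q : ℂ) = 1 := by linear_combination h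
    have : q = 1 := by exact_mod_cast this
    omega
  have hζq1 : ζ ^ (q + 1) ≠ 1 := by
    rw [hζ, ← Complex.exp_nat_mul]
    intro h
    obtain ⟨n, hn⟩ := Complex.exp_eq_one_iff.mp h
    apply hdvd
    refine ⟨n, ?_⟩
    have h2πI : (2 * (Real.pi : ℂ) * Complex.I) ≠ 0 := by
      simp [Real.pi_ne_zero, Complex.I_ne_zero]
    have hNC' : (N : ℂ) = ((q : ℂ) + 1) * ((q : ℂ) - 1) := by
      rw [hNfact]; push_cast [Nat.cast_sub (by omega : 1 ≤ q)]; ring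
    have hq1C' : ((q : ℂ) + 1) ≠ 0 := by
      intro h'
      have : (q : ℝ) + 1 = 0 := by exact_mod_cast congrArg Complex.re h'
      have : (0:ℝ) ≤ (q:ℝ) := Nat.cast_nonneg q
      linarith
    have key : c = (n : ℂ) * ((q : ℂ) - 1) := by
      have h' := hn
      rw [hNC'] at h'
      push_cast at h'
      field_simp at h'
      have hcan : (((q:ℂ) + 1) * (2 * (Real.pi:ℂ) * Complex.I)) * c
          = (((q:ℂ) + 1) * (2 * (Real.pi:ℂ) * Complex.I)) * ((n:ℂ) * ((q:ℂ) - 1)) := by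
        linear_combination (((q:ℂ) + 1) * (2 * (Real.pi:ℂ) * Complex.I)) * h'
      exact mul_left_cancel₀ (mul_ne_zero hq1C' h2πI) hcan
    rw [hcint] at key
    have key2 : (((k₁:ℤ) - (k₂:ℤ) : ℤ) : ℂ) = ((((((q:ℤ)-1)) * n : ℤ)) : ℂ) := by
      push_cast at key ⊢
      linear_combination key
    exact_mod_cast key2
  -- basic ζ facts
  have hζ0 : ζ ≠ 0 := Complex.exp_ne_zero _
  have hζ1 : ζ ≠ 1 := fun h => hζq1 (by rw [h, one_pow])
  have hζpow : ∀ a b : ℕ, a ≡ b [MOD N] → ζ ^ a = ζ ^ b := fun a b hab =>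
    pow_eq_pow_of_modEq_aux hζN hab
  have hχmul : ∀ u v : F, u ≠ 0 → v ≠ 0 → ζ ^ log (u * v) = ζ ^ log u * ζ ^ log v := by
    intro u v hu hv
    have huv : u * v ≠ 0 := mul_ne_zero hu hv
    have hm : (g : F) ^ (log u + log v) = u * v := by
      rw [pow_add, (hlog u hu).2, (hlog v hv).2]
    rw [hζpow _ _ (hlog_mod _ huv _ hm), pow_add]
  have hlog_g : ζ ^ log (g : F) = ζ := by
    rw [hζpow _ 1 (hlog_mod _ (Units.ne_zero g) 1 (pow_one _)), pow_one]
  have hlog_one : ζ ^ log (1 : F) = 1 := by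
    rw [hζpow _ 0 (hlog_mod _ one_ne_zero 0 (pow_zero _)), pow_zero]
  -- K is the fixed field of x ↦ x^q
  have hKpow : ∀ x : F, x ∈ K → x ^ q = x := by
    intro x hx
    have h1 : (⟨x, hx⟩ : ↥K) ^ q = ⟨x, hx⟩ := by
      rw [← hK]; exact FiniteField.pow_card _
    have h2 := congrArg (Subtype.val) h1
    rw [SubmonoidClass.coe_pow] at h2
    exact h2
  have hroots : ∀ x : F, x ^ q = x → x ∈ K := by
    intro x hx
    by_contra hxK
    set p : Polynomial F := Polynomial.X ^ q - Polynomial.X with hp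
    have hdeg : p.degree = (q : WithBot ℕ) := by
      rw [hp, Polynomial.degree_sub_eq_left_of_degree_lt, Polynomial.degree_X_pow]
      rw [Polynomial.degree_X, Polynomial.degree_X_pow]
      exact_mod_cast (by omega : 1 < q)
    have hpne : p ≠ 0 := by
      intro h
      rw [h, Polynomial.degree_zero] at hdeg
      exact (by simp : (⊥ : WithBot ℕ) ≠ (q : WithBot ℕ)) hdeg
    have hndeg : p.natDegree = q := Polynomial.natDegree_eq_of_degree_eq_some hdeg
    have hsub : insert x (Finset.image (fun t : ↥K => (t : F)) Finset.univ) ⊆ p.roots.toFinset := by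
      intro y hy
      rw [Multiset.mem_toFinset, Polynomial.mem_roots hpne]
      have hyq : y ^ q = y := by
        rcases Finset.mem_insert.mp hy with rfl | hy'
        · exact hx
        · obtain ⟨t, _, rfl⟩ := Finset.mem_image.mp hy'
          exact hKpow _ t.2
      simp [hp, Polynomial.IsRoot, sub_eq_zero, hyq]
    have hcard1 : (Finset.image (fun t : ↥K => (t : F)) Finset.univ).card = q := by
      rw [Finset.card_image_of_injective _ Subtype.val_injective, Finset.card_univ, hK]
    have hxnot : x ∉ Finset.image (fun t : ↥K => (t : F)) Finset.univ := by
      intro hmem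
      obtain ⟨t, _, rfl⟩ := Finset.mem_image.mp hmem
      exact hxK t.2
    have hbig : q + 1 ≤ p.roots.toFinset.card := by
      have := Finset.card_le_card hsub
      rwa [Finset.card_insert_of_notMem hxnot, hcard1] at this
    have hsmall : p.roots.toFinset.card ≤ q := by
      calc p.roots.toFinset.card ≤ Multiset.card p.roots := Multiset.toFinset_card_le _
        _ ≤ p.natDegree := Polynomial.card_roots' p
        _ = q := hndeg
    omega
  -- g^(q+1) lies in K
  have hyK : (g : F) ^ (q + 1) ∈ K := by
    apply hroots
    rw [← pow_mul]
    have : (q + 1) * q = N + (q + 1) := by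
      have : (q + 1) * q = q ^ 2 + q := by ring
      omega
    rw [this, pow_add, hgN, one_mul]
  have hyne : (g : F) ^ (q + 1) ≠ 0 := pow_ne_zero _ (Units.ne_zero g)
  have hlog_y : ζ ^ log ((g : F) ^ (q + 1)) = ζ ^ (q + 1) :=
    hζpow _ _ (hlog_mod _ hyne _ rfl)
  -- vanishing character sums
  have hSF : ∑ u ∈ univ.filter (fun u : F => u ≠ 0), ζ ^ log u = 0 := by
    apply sum_eq_zero_of_mul_shift_aux _ (g : F) (Units.ne_zero g) _ ζ hζ1
    · intro u hu
      rw [Finset.mem_filter] at hu ⊢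
      exact ⟨Finset.mem_univ _, mul_ne_zero (Units.ne_zero g) hu.2⟩
    · intro u hu
      rw [Finset.mem_filter] at hu
      rw [hχmul _ _ (Units.ne_zero g) hu.2, hlog_g]
  have hSK : ∑ u ∈ univ.filter (fun u : F => u ∈ K ∧ u ≠ 0), ζ ^ log u = 0 := by
    apply sum_eq_zero_of_mul_shift_aux _ ((g : F) ^ (q + 1)) hyne _ (ζ ^ (q + 1)) hζq1
    · intro u hu
      rw [Finset.mem_filter] at hu ⊢
      exact ⟨Finset.mem_univ _, K.mul_mem hyK hu.2.1, mul_ne_zero hyne hu.2.2⟩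
    · intro u hu
      rw [Finset.mem_filter] at hu
      rw [hχmul _ _ hyne hu.2.2, hlog_y]
  have hSnotK : ∑ u ∈ univ.filter (fun u : F => u ∉ K), ζ ^ log u = 0 := by
    have hsplit := Finset.sum_filter_add_sum_filter_not (univ.filter (fun u : F => u ≠ 0))
      (fun u => u ∈ K) (fun u => ζ ^ log u)
    have e1 : (univ.filter (fun u : F => u ≠ 0)).filter (fun u => u ∈ K)
        = univ.filter (fun u : F => u ∈ K ∧ u ≠ 0) := by
      ext u; simp [and_comm]
    have e2 : (univ.filter (fun u : F => u ≠ 0)).filter (fun u => u ∉ K)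
        = univ.filter (fun u : F => u ∉ K) := by
      ext u
      simp only [mem_filter, mem_univ, true_and]
      constructor
      · rintro ⟨-, h⟩; exact h
      · intro h; exact ⟨fun h0 => h (h0 ▸ K.zero_mem), h⟩
    rw [e1, e2, hSK, hSF] at hsplit
    simpa using hsplit
  -- the column sum
  set T : ℂ := ∑ t : ↥K, ζ ^ log ((t : F) - α) with hT
  have hne : ∀ t : ↥K, (t : F) - α ≠ 0 := by
    intro t h
    exact hα ((sub_eq_zero.mp h) ▸ t.2)
  have hconjζpow : ∀ m : ℕ, (starRingEnd ℂ) (ζ ^ m) = (ζ ^ m)⁻¹ := by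
    intro m
    rw [map_pow, ← inv_pow]
    congr 1
    rw [hζ, ← Complex.exp_conj, ← Complex.exp_neg]
    congr 1
    rw [hc]
    simp [map_div₀, map_ofNat]
    ring
  have hterm2 : ∀ t s : ↥K, ζ ^ log ((t : F) - α) * (ζ ^ log ((s : F) - α))⁻¹
      = ζ ^ log (((t : F) - α) * ((s : F) - α)⁻¹) := by
    intro t s
    have h1 := hne t
    have h2 := hne s
    have h3 : ((t : F) - α) * ((s : F) - α)⁻¹ * ((s : F) - α) = (t : F) - α := by
      field_simp
    have h4 := hχmul (((t : F) - α) * ((s : F) - α)⁻¹) ((s : F) - α)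
      (mul_ne_zero h1 (inv_ne_zero h2)) h2
    rw [h3] at h4
    rw [h4, mul_inv_cancel_right₀ (pow_ne_zero _ hζ0)]
  set φ : ↥K × ↥K → F := fun p => ((p.1 : F) - α) * ((p.2 : F) - α)⁻¹ with hφ
  clear_value φ
  have hdouble : T * (starRingEnd ℂ) T
      = ∑ p ∈ (univ : Finset ↥K) ×ˢ (univ : Finset ↥K), ζ ^ log (φ p) := by
    rw [hT, map_sum, Finset.sum_mul_sum, Finset.sum_product]
    refine Finset.sum_congr rfl fun t _ => Finset.sum_congr rfl fun s _ => ?_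
    rw [hconjζpow, hterm2]
    simp only [hφ]
  have hdiag : ∑ p ∈ (univ : Finset ↥K).diag, ζ ^ log (φ p) = (q : ℂ) := by
    have h1 : ∀ p ∈ (univ : Finset ↥K).diag, ζ ^ log (φ p) = 1 := by
      intro p hp
      obtain ⟨-, h⟩ := Finset.mem_diag.mp hp
      simp only [hφ]
      rw [← h, mul_inv_cancel₀ (hne p.1), hlog_one]
    rw [Finset.sum_congr rfl h1, Finset.sum_const, Finset.diag_card, Finset.card_univ, hK,
      nsmul_eq_mul, mul_one]
  have hφnotK : ∀ p : ↥K × ↥K, p.1 ≠ p.2 → φ p ∉ K := by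
    intro p hp hmem
    have h2 := hne p.2
    have heq : ((p.1 : F) - α) = φ p * ((p.2 : F) - α) := by
      simp only [hφ]
      field_simp
    by_cases hw1 : φ p = 1
    · rw [hw1, one_mul] at heq
      exact hp (Subtype.ext (by linear_combination heq))
    · apply hα
      have hsub : φ p - 1 ≠ 0 := sub_ne_zero.mpr hw1
      have hα_eq : α = (φ p * (p.2 : F) - (p.1 : F)) / (φ p - 1) := by
        rw [eq_div_iff hsub]
        linear_combination heq
      rw [hα_eq]
      exact K.div_mem (K.sub_mem (K.mul_mem hmem p.2.2) p.1.2) (K.sub_mem hmem K.one_mem)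
  have hφinj : ∀ p ∈ (univ : Finset ↥K).offDiag, ∀ p' ∈ (univ : Finset ↥K).offDiag,
      φ p = φ p' → p = p' := by
    rintro ⟨t, s⟩ hp ⟨t', s'⟩ hp' h
    obtain ⟨-, -, hp12⟩ := Finset.mem_offDiag.mp hp
    obtain ⟨-, -, hp12'⟩ := Finset.mem_offDiag.mp hp'
    simp only at hp12 hp12'
    have h2 := hne s
    have h2' := hne s'
    have hcross : ((t : F) - α) * ((s' : F) - α) = ((t' : F) - α) * ((s : F) - α) := by
      simp only [hφ] at h
      rw [← div_eq_mul_inv, ← div_eq_mul_inv] at h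
      exact (div_eq_div_iff h2 h2').mp h
    have hKe : ((t : F) * (s' : F) - (t' : F) * (s : F))
        = α * ((t : F) + (s' : F) - (t' : F) - (s : F)) := by
      linear_combination hcross
    by_cases hzero : ((t : F) + (s' : F) - (t' : F) - (s : F)) = 0
    · rw [hzero, mul_zero] at hKe
      have hfact : ((t : F) - (s : F)) * ((s' : F) - (s : F)) = 0 := by
        linear_combination hKe - (s : F) * hzero
      rcases mul_eq_zero.mp hfact with h' | h'
      · exact absurd (Subtype.ext (sub_eq_zero.mp h')) hp12
      · have hss : (s' : F) = (s : F) := sub_eq_zero.mp h'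
        have htt : (t : F) = (t' : F) := by linear_combination hzero - h'
        exact Prod.ext (Subtype.ext htt) ((Subtype.ext hss).symm)
    · exfalso
      apply hα
      have hα_eq : α = ((t : F) * (s' : F) - (t' : F) * (s : F))
          / ((t : F) + (s' : F) - (t' : F) - (s : F)) := by
        rw [eq_div_iff hzero]
        linear_combination -hKe
      rw [hα_eq]
      exact K.div_mem (K.sub_mem (K.mul_mem t.2 s'.2) (K.mul_mem t'.2 s.2))
        (K.sub_mem (K.sub_mem (K.add_mem t.2 s'.2) t'.2) s.2)
  have himgφ : (univ : Finset ↥K).offDiag.image φ = univ.filter (fun u : F => u ∉ K) := by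
    apply Finset.eq_of_subset_of_card_le
    · intro x hx
      obtain ⟨p, hp, rfl⟩ := Finset.mem_image.mp hx
      obtain ⟨-, -, h12⟩ := Finset.mem_offDiag.mp hp
      exact Finset.mem_filter.mpr ⟨Finset.mem_univ _, hφnotK p h12⟩
    · rw [Finset.card_image_of_injOn fun a ha b hb hh => hφinj a ha b hb hh,
        Finset.offDiag_card, Finset.card_univ, hK]
      have hcardK : (univ.filter (fun u : F => u ∈ K)).card = q := by
        rw [← Fintype.card_subtype]
        convert hK
      have hfilters := Finset.card_filter_add_card_filter_not
        (s := (univ : Finset F)) (p := fun u : F => u ∈ K)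
      rw [Finset.card_univ, hF, hcardK] at hfilters
      have hqq : q ^ 2 = q * q := sq q
      omega
  have hoff : ∑ p ∈ (univ : Finset ↥K).offDiag, ζ ^ log (φ p) = 0 := by
    have h := hSnotK
    rw [← himgφ, Finset.sum_image hφinj] at h
    exact h
  have hkey : T * (starRingEnd ℂ) T = (q : ℂ) := by
    rw [hdouble, ← Finset.diag_union_offDiag,
      Finset.sum_union (Finset.disjoint_diag_offDiag _), hdiag, hoff, add_zero]
  -- conclude
  have habsT : ‖T‖ = Real.sqrt q := by
    have h1 : ((Complex.normSq T : ℝ) : ℂ) = (q : ℂ) := by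
      rw [← Complex.mul_conj]; exact hkey
    have h2 : (Complex.normSq T : ℝ) = (q : ℝ) := by exact_mod_cast h1
    rw [Complex.norm_def, h2]
  have hsum_eq : ∑ t : ↥K, Complex.exp (2 * (Real.pi : ℂ) * Complex.I *
      c * ((log ((t : F) - α) : ℕ) : ℂ) / (N : ℂ)) = T := by
    rw [hT]
    exact Finset.sum_congr rfl fun t _ => hterm _
  have habs_le : ‖1 + T‖ ≤ Real.sqrt q + 1 := by
    calc ‖1 + T‖ ≤ ‖(1:ℂ)‖ + ‖T‖ := norm_add_le _ _
      _ = Real.sqrt q + 1 := by rw [norm_one, habsT]; ring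
  have habs_ge : Real.sqrt q - 1 ≤ ‖1 + T‖ := by
    have h1 : ‖T‖ ≤ ‖1 + T‖ + 1 := by
      calc ‖T‖ = ‖(1 + T) + (-1)‖ := by congr 1; ring
        _ ≤ ‖1 + T‖ + ‖(-1:ℂ)‖ := norm_add_le _ _
        _ = ‖1 + T‖ + 1 := by norm_num
    rw [habsT] at h1
    linarith
  have hq1R : (0 : ℝ) < (q : ℝ) + 1 := by positivity
  rw [hsum_eq]
  constructor
  · rw [one_div_mul_eq_div]
    exact (div_le_div_iff_of_pos_right hq1R).mpr habs_ge
  · rw [one_div_mul_eq_div]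
    exact (div_le_div_iff_of_pos_right hq1R).mpr habs_le
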